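/- For all n ≥ 1, the Frobenius number G_U(n) of the set {U_n, U_{n+1}, U_{n+2}, …} satisfies −5 ≤ G_U(n) − 3U_n ≤ 20, where U_n = ⌊nφ²⌋ and φ = (1+√5)/2. -/

import Mathlib

noncomputable def phi : ℝ := (1 + Real.sqrt 5) / 2

/-- The upper Wythoff sequence. -/
noncomputable def uw (n : ℕ) : ℕ := ⌊(n : ℝ) * phi ^ 2⌋₊

lemma sqrt5_sq : Real.sqrt 5 ^ 2 = 5 := Real.sq_sqrt (by norm_num)

lemma sqrt5_gt : (2.236:ℝ) < Real.sqrt 5 := by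
  nlinarith [sqrt5_sq, Real.sqrt_nonneg 5]

lemma sqrt5_lt : Real.sqrt 5 < 2.2361 := by
  nlinarith [sqrt5_sq, Real.sqrt_nonneg 5]

lemma phi_gt : (1.618:ℝ) < phi := by unfold phi; nlinarith [sqrt5_gt]
lemma phi_lt : phi < 1.61805 := by unfold phi; nlinarith [sqrt5_lt]
lemma phi_pos : (0:ℝ) < phi := by nlinarith [phi_gt]
lemma phi_sq : phi ^ 2 = phi + 1 := by
  unfold phi; nlinarith [sqrt5_sq]

lemma phi_irr : Irrational phi := by
  have h5 : Irrational (Real.sqrt 5) := by simpa using (by norm_num : Nat.Prime 5).irrational_sqrt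
  have h1 : Irrational ((1:ℤ) + Real.sqrt 5) := h5.intCast_add 1
  have h2 : Irrational (((1:ℤ) + Real.sqrt 5) / (2:ℤ)) := h1.div_intCast (by norm_num)
  unfold phi
  convert h2 using 2 <;> push_cast <;> ring

lemma phi_lin {m : ℤ} (hm : m ≠ 0) (z : ℤ) : (m:ℝ) * phi ≠ (z:ℝ) := by
  intro h
  have : Irrational ((m:ℝ) * phi) := phi_irr.intCast_mul hm
  rw [h] at this
  exact (Rat.not_irrational z) (by simpa using this)

noncomputable def fr (m : ℕ) : ℝ := m * phi ^ 2 - uw m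

lemma phisq_pos : (0:ℝ) < phi ^ 2 := by nlinarith [phi_gt]

lemma uw_le (m : ℕ) : (uw m : ℝ) ≤ m * phi ^ 2 :=
  Nat.floor_le (by positivity)

lemma lt_uw (m : ℕ) : (m:ℝ) * phi ^ 2 < uw m + 1 := Nat.lt_floor_add_one _

lemma fr_nonneg (m : ℕ) : 0 ≤ fr m := by
  have := uw_le m; unfold fr; linarith

lemma fr_lt_one (m : ℕ) : fr m < 1 := by
  have := lt_uw m; unfold fr; linarith

lemma uw_real (m : ℕ) : (uw m : ℝ) = m * phi ^ 2 - fr m := by unfold fr; ring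

lemma fr_pos {m : ℕ} (hm : 1 ≤ m) : 0 < fr m := by
  rcases lt_or_eq_of_le (fr_nonneg m) with h | h
  · exact h
  · exfalso
    have : ((m:ℤ):ℝ) * phi = ((uw m : ℤ) - m : ℤ) := by
      have : (m:ℝ) * phi ^ 2 = uw m := by unfold fr at h; linarith
      push_cast
      rw [phi_sq] at this; linarith
    exact phi_lin (by exact_mod_cast Nat.one_le_iff_ne_zero.mp hm) _ this

lemma uw_mono : Monotone uw := fun a b h => Nat.floor_mono (by
  have : (a:ℝ) ≤ b := by exact_mod_cast h
  nlinarith [phisq_pos])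

lemma two_mul_le_uw (m : ℕ) : 2 * m ≤ uw m := by
  apply Nat.le_floor
  push_cast
  nlinarith [phi_gt, phi_sq, Nat.cast_nonneg (α := ℝ) m]

lemma uw_one : uw 1 = 2 := by
  unfold uw
  rw [Nat.floor_eq_iff (by positivity)]
  rw [phi_sq] at *
  constructor <;> push_cast <;> nlinarith [phi_gt, phi_lt]

-- the integer gap z = uw(a+b) - uw a - uw b
lemma z_eq (a b : ℕ) : ((uw (a+b) : ℝ)) - uw a - uw b = fr a + fr b - fr (a+b) := by
  rw [uw_real, uw_real, uw_real]; push_cast; ring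

lemma uw_superadd (a b : ℕ) : uw a + uw b ≤ uw (a + b) := by
  have h := z_eq a b
  have h1 := fr_nonneg a; have h2 := fr_nonneg b; have h3 := fr_nonneg (a+b)
  have h4 := fr_lt_one a; have h5 := fr_lt_one b; have h6 := fr_lt_one (a+b)
  have : ((uw a + uw b : ℕ) : ℝ) < ((uw (a+b) : ℕ) : ℝ) + 1 := by push_cast; linarith
  exact_mod_cast Nat.lt_add_one_iff.mp (by exact_mod_cast this)

lemma uw_subadd (a b : ℕ) : uw (a + b) ≤ uw a + uw b + 1 := by
  have h := z_eq a b
  have h1 := fr_nonneg a; have h2 := fr_nonneg b; have h3 := fr_nonneg (a+b)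
  have h4 := fr_lt_one a; have h5 := fr_lt_one b; have h6 := fr_lt_one (a+b)
  have : ((uw (a+b) : ℕ) : ℝ) < ((uw a + uw b + 1 : ℕ) : ℝ) + 1 := by push_cast; linarith
  exact_mod_cast Nat.lt_add_one_iff.mp (by exact_mod_cast this)

lemma key2 {a b : ℕ} (h : fr (a+b) < fr a) : uw a + uw b + 1 = uw (a + b) := by
  have hz := z_eq a b
  have h2 := fr_nonneg b; have h5 := fr_lt_one b
  have h4 := fr_lt_one a; have h3 := fr_nonneg (a+b)
  have hlow : ((uw a + uw b : ℕ) : ℝ) < uw (a+b) := by push_cast; linarith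
  have hhi : ((uw (a+b) : ℕ):ℝ) < ((uw a + uw b + 1 : ℕ):ℝ) + 1 := by push_cast; linarith
  have l1 : uw a + uw b < uw (a+b) := by exact_mod_cast hlow
  have l2 : uw (a+b) < uw a + uw b + 2 := by exact_mod_cast hhi
  omega

lemma key3 {a b c : ℕ} (h : 1 + fr (a+b+c) < fr a + fr b) :
    uw a + uw b + uw c + 2 = uw (a + b + c) := by
  have hz1 := z_eq (a+b) c
  have hz2 := z_eq a b
  have h1 := fr_nonneg c; have h2 := fr_lt_one c
  have h3 := fr_nonneg (a+b); have h4 := fr_lt_one (a+b)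
  have h5 := fr_lt_one a; have h6 := fr_lt_one b
  have h7 := fr_nonneg (a+b+c)
  -- uw(a+b+c) - uw a - uw b - uw c = fr a + fr b + fr c - fr(a+b+c) ∈ (1+fr c, 3) ⊆ (1,3)
  have key : ((uw (a+b+c) : ℝ)) - uw a - uw b - uw c = fr a + fr b + fr c - fr (a+b+c) := by
    rw [uw_real, uw_real, uw_real, uw_real]; push_cast; ring
  have hlow : ((uw a + uw b + uw c + 1 : ℕ) : ℝ) < uw (a+b+c) := by push_cast; linarith
  have hhi : ((uw (a+b+c) : ℕ):ℝ) < ((uw a + uw b + uw c + 2 : ℕ):ℝ) + 1 := by push_cast; linarith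
  have l1 : uw a + uw b + uw c + 1 < uw (a+b+c) := by exact_mod_cast hlow
  have l2 : uw (a+b+c) < uw a + uw b + uw c + 3 := by exact_mod_cast hhi
  omega

lemma key3' {a b c : ℕ} (h1 : fr (a+b+c) < fr a + fr b) (h2 : fr a + fr b < 1 + fr (a+b+c)) :
    uw a + uw b + uw c + 1 = uw (a + b + c) := by
  have h3 := fr_nonneg c; have h4 := fr_lt_one c
  have key : ((uw (a+b+c) : ℝ)) - uw a - uw b - uw c = fr a + fr b + fr c - fr (a+b+c) := by
    rw [uw_real, uw_real, uw_real, uw_real]; push_cast; ring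
  have hlow : ((uw a + uw b + uw c : ℕ) : ℝ) < uw (a+b+c) := by push_cast; linarith
  have hhi : ((uw (a+b+c) : ℕ):ℝ) < ((uw a + uw b + uw c + 1 : ℕ):ℝ) + 1 := by push_cast; linarith
  have l1 : uw a + uw b + uw c < uw (a+b+c) := by exact_mod_cast hlow
  have l2 : uw (a+b+c) < uw a + uw b + uw c + 2 := by exact_mod_cast hhi
  omega

lemma uw_add_eval (m i c : ℕ) (h1 : (c:ℝ) ≤ fr m + i * phi ^ 2) (h2 : fr m + i * phi ^ 2 < c + 1) :
    uw (m + i) = uw m + c := by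
  have key : ((m + i : ℕ) : ℝ) * phi ^ 2 = (uw m : ℝ) + (fr m + i * phi ^ 2) := by
    rw [uw_real]; push_cast; ring
  have hdef : uw (m + i) = ⌊((m + i : ℕ):ℝ) * phi ^ 2⌋₊ := rfl
  rw [hdef, Nat.floor_eq_iff (by positivity)]
  rw [key]
  constructor
  · push_cast; linarith
  · push_cast; linarith

lemma fr_add_eval (m i c : ℕ) (h : uw (m + i) = uw m + c) :
    fr (m + i) = fr m + i * phi ^ 2 - c := by
  unfold fr at *
  rw [h]
  push_cast
  ring

lemma fr_ne_fr {a c : ℕ} (h : a ≠ c) : fr a ≠ fr c := by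
  intro he
  unfold fr at he
  have : ((a:ℤ) - c : ℤ) * phi = ((uw a : ℤ) - uw c - ((a:ℤ) - c) : ℤ) := by
    push_cast
    rw [phi_sq] at he
    nlinarith [he]
  exact phi_lin (by omega : ((a:ℤ) - c) ≠ 0) _ this

lemma rep_of_mem {n k : ℕ} (hk : k ∈ AddSubmonoid.closure {x : ℕ | ∃ j, n ≤ j ∧ x = uw j}) :
    ∃ J : Multiset ℕ, (∀ j ∈ J, n ≤ j) ∧ (J.map uw).sum = k := by
  induction hk using AddSubmonoid.closure_induction with
  | mem x hx =>
    obtain ⟨j, hj, rfl⟩ := hx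
    exact ⟨{j}, by simpa using hj, by simp⟩
  | zero => exact ⟨0, by simp, by simp⟩
  | add x y hx hy ihx ihy =>
    obtain ⟨J1, hJ1, hs1⟩ := ihx
    obtain ⟨J2, hJ2, hs2⟩ := ihy
    refine ⟨J1 + J2, ?_, ?_⟩
    · intro j hj
      rcases Multiset.mem_add.mp hj with h | h
      · exact hJ1 j h
      · exact hJ2 j h
    · simp [hs1, hs2]

lemma sum_map_le_uw_sum (J : Multiset ℕ) : (J.map uw).sum ≤ uw J.sum := by
  induction J using Multiset.induction with
  | empty => simp [uw]
  | cons a J ih =>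
    simp only [Multiset.map_cons, Multiset.sum_cons]
    calc uw a + (J.map uw).sum ≤ uw a + uw J.sum := by omega
    _ ≤ uw (a + J.sum) := uw_superadd _ _

lemma uw_sum_le_sum_map (J : Multiset ℕ) (hJ : J ≠ 0) :
    uw J.sum + 1 ≤ (J.map uw).sum + Multiset.card J := by
  induction J using Multiset.induction with
  | empty => simp at hJ
  | cons a J ih =>
    rcases eq_or_ne J 0 with rfl | hne
    · simp
    · have h1 := uw_subadd a J.sum
      have h2 := ih hne
      simp only [Multiset.map_cons, Multiset.sum_cons, Multiset.card_cons]
      omega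

lemma card_mul_le_sum_map {n : ℕ} (J : Multiset ℕ) (hJ : ∀ j ∈ J, n ≤ j) :
    Multiset.card J * uw n ≤ (J.map uw).sum := by
  induction J using Multiset.induction with
  | empty => simp
  | cons a J ih =>
    simp only [Multiset.map_cons, Multiset.sum_cons, Multiset.card_cons]
    have h1 : uw n ≤ uw a := uw_mono (hJ a (Multiset.mem_cons_self a J))
    have h2 := ih (fun j hj => hJ j (Multiset.mem_cons_of_mem hj))
    ring_nf
    nlinarith [h1, h2]

lemma card_mul_le_sum {n : ℕ} (J : Multiset ℕ) (hJ : ∀ j ∈ J, n ≤ j) :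
    Multiset.card J * n ≤ J.sum := by
  induction J using Multiset.induction with
  | empty => simp
  | cons a J ih =>
    simp only [Multiset.sum_cons, Multiset.card_cons]
    have h1 : n ≤ a := hJ a (Multiset.mem_cons_self a J)
    have h2 := ih (fun j hj => hJ j (Multiset.mem_cons_of_mem hj))
    ring_nf
    nlinarith [h1, h2]

lemma not_mem_of_bracket {n : ℕ} (hn : 1 ≤ n) (w tstar : ℤ) (hw : w ≤ -1) (hw5 : -5 ≤ w)
    (hts : tstar ≤ 0)
    (hb1 : (w:ℝ) + 2 ≤ 3 * fr n + tstar * (phi + 1))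
    (hb2 : 3 * fr n + tstar * (phi + 1) < w + 3)
    (hb3 : (w:ℝ) - 1 ≤ 3 * fr n + (tstar - 1) * (phi + 1))
    (hb4 : 3 * fr n + (tstar - 1) * (phi + 1) < w)
    (N : ℕ) (hN : (N:ℤ) = 3 * uw n + w) :
    N ∉ AddSubmonoid.closure {x : ℕ | ∃ j, n ≤ j ∧ x = uw j} := by
  intro hmem
  obtain ⟨J, hJmem, hJsum⟩ := rep_of_mem hmem
  set m := Multiset.card J with hm
  have hU : 2 ≤ uw n := by
    calc 2 = uw 1 := uw_one.symm
    _ ≤ uw n := uw_mono hn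
  have hNpos : 1 ≤ N := by omega
  -- m bounds
  have hm4 : m ≤ 3 := by
    by_contra h
    have h1 : m * uw n ≤ N := hJsum ▸ card_mul_le_sum_map J hJmem
    have : 4 * uw n ≤ m * uw n := by nlinarith
    omega
  have hm1 : 1 ≤ m := by
    rcases Nat.eq_zero_or_pos m with h | h
    · rw [hm] at h; rw [Multiset.card_eq_zero] at h; subst h; simp at hJsum; omega
    · exact h
  -- Σ and r
  set S := J.sum with hS
  have hSn : m * n ≤ S := card_mul_le_sum J hJmem
  have hS1 : 1 ≤ S := by nlinarith
  have hr1 : N ≤ uw S := hJsum ▸ sum_map_le_uw_sum J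
  have hr2 : uw S + 1 ≤ N + m := hJsum ▸ uw_sum_le_sum_map J (by
    intro h; rw [h] at hm; simp at hm; omega)
  set t : ℤ := (S:ℤ) - 3 * n with ht
  set r : ℤ := (uw S : ℤ) - N with hrdef
  have hr0 : 0 ≤ r := by omega
  have hrm : r ≤ m - 1 := by omega
  have hfrS1 : fr S < 1 := fr_lt_one S
  have hfrS0 : 0 < fr S := fr_pos hS1
  -- real identity: 3X + t*(phi+1) = w + r + fr S
  have hreal : 3 * fr n + (t:ℝ) * (phi + 1) = (w:ℝ) + r + fr S := by
    have e1 : (uw S : ℝ) = S * phi ^ 2 - fr S := uw_real S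
    have e2 : (uw n : ℝ) = n * phi ^ 2 - fr n := uw_real n
    have e3 : ((S:ℕ):ℝ) = 3 * (n:ℝ) + ((t:ℤ):ℝ) := by rw [ht]; push_cast; ring
    have e4 : (r:ℝ) = (uw S : ℝ) - N := by push_cast [hrdef]; ring
    have e5 : (N:ℝ) = 3 * (uw n:ℝ) + w := by exact_mod_cast hN
    rw [phi_sq] at e1 e2
    nlinarith [e1, e2, e3, e4, e5]
  -- trichotomy
  have hphig := phi_gt
  have hphil := phi_lt
  rcases lt_trichotomy t tstar with hlt | heq | hgt
  · have h1 : (t:ℝ) ≤ (tstar:ℝ) - 1 := by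
      have h : t ≤ tstar - 1 := by omega
      have h2 : ((t:ℤ):ℝ) ≤ ((tstar - 1 : ℤ):ℝ) := by exact_mod_cast h
      push_cast at h2; linarith
    have h2 : (t:ℝ) * (phi + 1) ≤ ((tstar:ℝ) - 1) * (phi + 1) :=
      mul_le_mul_of_nonneg_right h1 (by linarith [phi_gt])
    have hr0' : (0:ℝ) ≤ (r:ℝ) := by exact_mod_cast hr0
    linarith
  · rw [heq] at hreal
    have hrr : (1:ℝ) < (r:ℝ) := by linarith
    have hr2' : (2:ℤ) ≤ r := by
      have h : (1:ℤ) < r := by exact_mod_cast hrr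
      omega
    have hm3 : m = 3 := by omega
    have h3n : 3 * n ≤ S := by
      have h := hSn; rw [hm3] at h; exact h
    have hts0 : (0:ℤ) ≤ tstar := by omega
    have htz : tstar = 0 := le_antisymm hts hts0
    have hSeq : S = 3 * n := by omega
    have hall : ∀ j ∈ J, j = n := by
      intro j hj
      refine le_antisymm ?_ (hJmem j hj)
      obtain ⟨J', hJ'⟩ := Multiset.exists_cons_of_mem hj
      have hc' : Multiset.card J' = 2 := by
        have : Multiset.card (j ::ₘ J') = Multiset.card J' + 1 := Multiset.card_cons _ _
        rw [← hJ'] at this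
        omega
      have hmem' : ∀ x ∈ J', n ≤ x := fun x hx => hJmem x (hJ' ▸ Multiset.mem_cons_of_mem hx)
      have h2n : 2 * n ≤ J'.sum := by
        have h := card_mul_le_sum J' hmem'
        rw [hc'] at h; exact h
      have hsum' : j + J'.sum = S := by
        rw [hS, hJ', Multiset.sum_cons]
      omega
    have hrep : J = Multiset.replicate 3 n :=
      Multiset.eq_replicate.mpr ⟨by omega, hall⟩
    rw [hrep] at hJsum
    rw [Multiset.map_replicate, Multiset.sum_replicate] at hJsum
    have : 3 * uw n = N := by
      rw [← hJsum]; simp [smul_eq_mul]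
    omega
  · have h1 : (tstar:ℝ) + 1 ≤ (t:ℝ) := by
      have h : tstar + 1 ≤ t := by omega
      have h2 : ((tstar + 1 : ℤ):ℝ) ≤ ((t:ℤ):ℝ) := by exact_mod_cast h
      push_cast at h2; linarith
    have h2 : ((tstar:ℝ) + 1) * (phi + 1) ≤ (t:ℝ) * (phi + 1) :=
      mul_le_mul_of_nonneg_right h1 (by linarith [phi_gt])
    have hrle : (r:ℝ) ≤ 2 := by
      have h : r ≤ 2 := by omega
      exact_mod_cast h
    linarith [phi_gt, hfrS1]

lemma three_fr_ne {n : ℕ} (hn : 1 ≤ n) {c : ℝ} (a b : ℤ) (hb : b < 3 * (n:ℤ))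
    (hc : c = (a:ℝ) + b * phi) : 3 * fr n ≠ c := by
  intro h
  unfold fr at h
  rw [phi_sq] at h
  apply phi_lin (show 3 * (n:ℤ) - b ≠ 0 by omega) (a - 3 * n + 3 * (uw n))
  push_cast
  rw [hc] at h
  linarith

lemma lower_bound {n : ℕ} (hn : 1 ≤ n) :
    ∃ N : ℕ, 3 * (uw n:ℤ) - 5 ≤ (N:ℤ) ∧
      N ∉ AddSubmonoid.closure {x : ℕ | ∃ j, n ≤ j ∧ x = uw j} := by
  have hU : 2 ≤ uw n := by
    calc 2 = uw 1 := uw_one.symm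
    _ ≤ uw n := uw_mono hn
  have hD0 : 0 < 3 * fr n := by linarith [fr_pos hn]
  have hD3 : 3 * fr n < 3 := by linarith [fr_lt_one n]
  have hg := phi_gt
  have hl := phi_lt
  rcases lt_or_ge (3 * fr n) (2*phi - 3) with h1 | h1
  · -- case 1 : w = -5, t* = -1
    refine ⟨3 * uw n - 5, by omega, ?_⟩
    exact not_mem_of_bracket hn (-5) (-1) (by norm_num) (by norm_num) (by norm_num)
      (by push_cast; linarith) (by push_cast; linarith)
      (by push_cast; linarith) (by push_cast; linarith) _ (by omega)
  have h1' : 2*phi - 3 < 3 * fr n :=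
    lt_of_le_of_ne h1 (Ne.symm (three_fr_ne hn (-3) 2 (by omega) (by push_cast; ring)))
  rcases lt_or_ge (3 * fr n) (phi - 1) with h2 | h2
  · -- case 2 : w = -2, t* = 0
    refine ⟨3 * uw n - 2, by omega, ?_⟩
    exact not_mem_of_bracket hn (-2) 0 (by norm_num) (by norm_num) (by norm_num)
      (by push_cast; linarith) (by push_cast; linarith)
      (by push_cast; linarith) (by push_cast; linarith) _ (by omega)
  have h2' : phi - 1 < 3 * fr n :=
    lt_of_le_of_ne h2 (Ne.symm (three_fr_ne hn (-1) 1 (by omega) (by push_cast; ring)))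
  rcases lt_or_ge (3 * fr n) 1 with h3 | h3
  · -- case 3 : w = -4, t* = -1
    refine ⟨3 * uw n - 4, by omega, ?_⟩
    exact not_mem_of_bracket hn (-4) (-1) (by norm_num) (by norm_num) (by norm_num)
      (by push_cast; linarith) (by push_cast; linarith)
      (by push_cast; linarith) (by push_cast; linarith) _ (by omega)
  have h3' : 1 < 3 * fr n :=
    lt_of_le_of_ne h3 (Ne.symm (three_fr_ne hn 1 0 (by omega) (by push_cast; ring)))
  rcases lt_or_ge (3 * fr n) (2*phi - 2) with h4 | h4
  · -- case 4 : w = -4, t* = -1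
    refine ⟨3 * uw n - 4, by omega, ?_⟩
    exact not_mem_of_bracket hn (-4) (-1) (by norm_num) (by norm_num) (by norm_num)
      (by push_cast; linarith) (by push_cast; linarith)
      (by push_cast; linarith) (by push_cast; linarith) _ (by omega)
  have h4' : 2*phi - 2 < 3 * fr n :=
    lt_of_le_of_ne h4 (Ne.symm (three_fr_ne hn (-2) 2 (by omega) (by push_cast; ring)))
  rcases lt_or_ge (3 * fr n) phi with h5 | h5
  · -- case 5 : w = -1, t* = 0
    refine ⟨3 * uw n - 1, by omega, ?_⟩
    exact not_mem_of_bracket hn (-1) 0 (by norm_num) (by norm_num) (by norm_num)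
      (by push_cast; linarith) (by push_cast; linarith)
      (by push_cast; linarith) (by push_cast; linarith) _ (by omega)
  have h5' : phi < 3 * fr n :=
    lt_of_le_of_ne h5 (Ne.symm (three_fr_ne hn 0 1 (by omega) (by push_cast; ring)))
  rcases lt_or_ge (3 * fr n) 2 with h6 | h6
  · -- case 6 : w = -3, t* = -1
    refine ⟨3 * uw n - 3, by omega, ?_⟩
    exact not_mem_of_bracket hn (-3) (-1) (by norm_num) (by norm_num) (by norm_num)
      (by push_cast; linarith) (by push_cast; linarith)
      (by push_cast; linarith) (by push_cast; linarith) _ (by omega)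
  have h6' : 2 < 3 * fr n :=
    lt_of_le_of_ne h6 (Ne.symm (three_fr_ne hn 2 0 (by omega) (by push_cast; ring)))
  rcases lt_or_ge (3 * fr n) (2*phi - 1) with h7 | h7
  · -- case 7 : w = -3, t* = -1
    refine ⟨3 * uw n - 3, by omega, ?_⟩
    exact not_mem_of_bracket hn (-3) (-1) (by norm_num) (by norm_num) (by norm_num)
      (by push_cast; linarith) (by push_cast; linarith)
      (by push_cast; linarith) (by push_cast; linarith) _ (by omega)
  have h7' : 2*phi - 1 < 3 * fr n :=
    lt_of_le_of_ne h7 (Ne.symm (three_fr_ne hn (-1) 2 (by omega) (by push_cast; ring)))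
  rcases lt_or_ge (3 * fr n) (phi + 1) with h8 | h8
  · -- case 8 : w = -5, t* = -2
    refine ⟨3 * uw n - 5, by omega, ?_⟩
    exact not_mem_of_bracket hn (-5) (-2) (by norm_num) (by norm_num) (by norm_num)
      (by push_cast; linarith) (by push_cast; linarith)
      (by push_cast; linarith) (by push_cast; linarith) _ (by omega)
  have h8' : phi + 1 < 3 * fr n :=
    lt_of_le_of_ne h8 (Ne.symm (three_fr_ne hn 1 1 (by omega) (by push_cast; ring)))
  -- case 9 : w = -2, t* = -1
  refine ⟨3 * uw n - 2, by omega, ?_⟩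
  exact not_mem_of_bracket hn (-2) (-1) (by norm_num) (by norm_num) (by norm_num)
    (by push_cast; linarith) (by push_cast; linarith)
    (by push_cast; linarith) (by push_cast; linarith) _ (by omega)

lemma fr_ne {n : ℕ} (hn : 1 ≤ n) {c : ℝ} (a b : ℤ) (hb : b < (n:ℤ))
    (hc : c = (a:ℝ) + b * phi) : fr n ≠ c := by
  intro h
  unfold fr at h
  rw [phi_sq] at h
  apply phi_lin (show (n:ℤ) - b ≠ 0 by omega) (a - n + uw n)
  push_cast
  rw [hc] at h
  linarith

lemma claimC {n : ℕ} (hn : 1 ≤ n) :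
    ∃ a b : ℕ, n ≤ a ∧ n ≤ b ∧ a + b ≤ 2*n + 9 ∧ phi < fr a + fr b := by
  have hX0 : 0 < fr n := fr_pos hn
  have hX1 : fr n < 1 := fr_lt_one n
  have hg := phi_gt
  have hl := phi_lt
  rcases lt_or_ge (fr n) (5 - 3*phi) with h1 | h1
  · -- C1 : (3,7),(3,7)
    have e1 : uw (n+3) = uw n + 7 := uw_add_eval n 3 7
      (by push_cast; rw [phi_sq]; linarith) (by push_cast; rw [phi_sq]; linarith)
    have f1 := fr_add_eval n 3 7 e1
    push_cast at f1
    refine ⟨n+3, n+3, by omega, by omega, by omega, ?_⟩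
    rw [f1, phi_sq]; linarith
  have h1' : 5 - 3*phi < fr n :=
    lt_of_le_of_ne h1 (Ne.symm (fr_ne hn 5 (-3) (by omega) (by push_cast; ring)))
  rcases lt_or_ge (fr n) (10 - 6*phi) with h2 | h2
  · -- C2 : (1,2),(6,15)
    have e1 : uw (n+1) = uw n + 2 := uw_add_eval n 1 2
      (by push_cast; rw [phi_sq]; linarith) (by push_cast; rw [phi_sq]; linarith)
    have f1 := fr_add_eval n 1 2 e1
    push_cast at f1
    have e2 : uw (n+6) = uw n + 15 := uw_add_eval n 6 15
      (by push_cast; rw [phi_sq]; linarith) (by push_cast; rw [phi_sq]; linarith)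
    have f2 := fr_add_eval n 6 15 e2
    push_cast at f2
    refine ⟨n+1, n+6, by omega, by omega, by omega, ?_⟩
    rw [f1, f2, phi_sq]; linarith
  have h2' : 10 - 6*phi < fr n :=
    lt_of_le_of_ne h2 (Ne.symm (fr_ne hn 10 (-6) (by omega) (by push_cast; ring)))
  rcases lt_or_ge (fr n) (2 - phi) with h3 | h3
  · -- C3 : (1,2),(1,2)
    have e1 : uw (n+1) = uw n + 2 := uw_add_eval n 1 2
      (by push_cast; rw [phi_sq]; linarith) (by push_cast; rw [phi_sq]; linarith)
    have f1 := fr_add_eval n 1 2 e1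
    push_cast at f1
    refine ⟨n+1, n+1, by omega, by omega, by omega, ?_⟩
    rw [f1, phi_sq]; linarith
  have h3' : 2 - phi < fr n :=
    lt_of_le_of_ne h3 (Ne.symm (fr_ne hn 2 (-1) (by omega) (by push_cast; ring)))
  rcases lt_or_ge (fr n) (7 - 4*phi) with h4 | h4
  · -- C4 : (4,10),(4,10)
    have e1 : uw (n+4) = uw n + 10 := uw_add_eval n 4 10
      (by push_cast; rw [phi_sq]; linarith) (by push_cast; rw [phi_sq]; linarith)
    have f1 := fr_add_eval n 4 10 e1
    push_cast at f1
    refine ⟨n+4, n+4, by omega, by omega, by omega, ?_⟩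
    rw [f1, phi_sq]; linarith
  have h4' : 7 - 4*phi < fr n :=
    lt_of_le_of_ne h4 (Ne.symm (fr_ne hn 7 (-4) (by omega) (by push_cast; ring)))
  rcases lt_or_ge (fr n) (12 - 7*phi) with h5 | h5
  · -- C5 : (2,5),(7,18)
    have e1 : uw (n+2) = uw n + 5 := uw_add_eval n 2 5
      (by push_cast; rw [phi_sq]; linarith) (by push_cast; rw [phi_sq]; linarith)
    have f1 := fr_add_eval n 2 5 e1
    push_cast at f1
    have e2 : uw (n+7) = uw n + 18 := uw_add_eval n 7 18
      (by push_cast; rw [phi_sq]; linarith) (by push_cast; rw [phi_sq]; linarith)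
    have f2 := fr_add_eval n 7 18 e2
    push_cast at f2
    refine ⟨n+2, n+7, by omega, by omega, by omega, ?_⟩
    rw [f1, f2, phi_sq]; linarith
  have h5' : 12 - 7*phi < fr n :=
    lt_of_le_of_ne h5 (Ne.symm (fr_ne hn 12 (-7) (by omega) (by push_cast; ring)))
  rcases lt_or_ge (fr n) (4 - 2*phi) with h6 | h6
  · -- C6 : (2,5),(2,5)
    have e1 : uw (n+2) = uw n + 5 := uw_add_eval n 2 5
      (by push_cast; rw [phi_sq]; linarith) (by push_cast; rw [phi_sq]; linarith)
    have f1 := fr_add_eval n 2 5 e1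
    push_cast at f1
    refine ⟨n+2, n+2, by omega, by omega, by omega, ?_⟩
    rw [f1, phi_sq]; linarith
  have h6' : 4 - 2*phi < fr n :=
    lt_of_le_of_ne h6 (Ne.symm (fr_ne hn 4 (-2) (by omega) (by push_cast; ring)))
  rcases lt_or_ge (fr n) (9 - 5*phi) with h7 | h7
  · -- C7 : (0,0),(5,13)
    have e2 : uw (n+5) = uw n + 13 := uw_add_eval n 5 13
      (by push_cast; rw [phi_sq]; linarith) (by push_cast; rw [phi_sq]; linarith)
    have f2 := fr_add_eval n 5 13 e2
    push_cast at f2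
    refine ⟨n, n+5, by omega, by omega, by omega, ?_⟩
    rw [f2, phi_sq]; linarith
  have h7' : 9 - 5*phi < fr n :=
    lt_of_le_of_ne h7 (Ne.symm (fr_ne hn 9 (-5) (by omega) (by push_cast; ring)))
  -- C8 : (0,0),(0,0)
  exact ⟨n, n, le_refl n, le_refl n, by omega, by linarith⟩

lemma exists_big_fr {n : ℕ} (hn : 1 ≤ n) :
    ∃ a : ℕ, n ≤ a ∧ a ≤ n + 2 ∧ phi - 1 < fr a ∧ fr a < 1 := by
  have hX0 : 0 < fr n := fr_pos hn
  have hX1 : fr n < 1 := fr_lt_one n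
  have hg := phi_gt
  have hl := phi_lt
  rcases lt_or_ge (fr n) (2 - phi) with h1 | h1
  · have e1 : uw (n+1) = uw n + 2 := uw_add_eval n 1 2
      (by push_cast; rw [phi_sq]; linarith) (by push_cast; rw [phi_sq]; linarith)
    have f1 := fr_add_eval n 1 2 e1
    push_cast at f1
    refine ⟨n+1, by omega, by omega, ?_, ?_⟩ <;> rw [f1, phi_sq] <;> linarith
  have h1' : 2 - phi < fr n :=
    lt_of_le_of_ne h1 (Ne.symm (fr_ne hn 2 (-1) (by omega) (by push_cast; ring)))
  rcases lt_or_ge (phi - 1) (fr n) with h2 | h2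
  · exact ⟨n, le_refl n, by omega, h2, hX1⟩
  · have e1 : uw (n+2) = uw n + 5 := uw_add_eval n 2 5
      (by push_cast; rw [phi_sq]; linarith) (by push_cast; rw [phi_sq]; linarith)
    have f1 := fr_add_eval n 2 5 e1
    push_cast at f1
    refine ⟨n+2, by omega, by omega, ?_, ?_⟩ <;> rw [f1, phi_sq] <;> linarith

lemma mem_uw {n j : ℕ} (hj : n ≤ j) :
    uw j ∈ AddSubmonoid.closure {x : ℕ | ∃ i, n ≤ i ∧ x = uw i} :=
  AddSubmonoid.subset_closure ⟨j, hj, rfl⟩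

lemma upper_rep {n : ℕ} (hn : 1 ≤ n) (k : ℕ) (hk : 3 * uw n + 21 ≤ k) :
    k ∈ AddSubmonoid.closure {x : ℕ | ∃ j, n ≤ j ∧ x = uw j} := by
  have hg := phi_gt
  have hl := phi_lt
  have hX0 : 0 < fr n := fr_pos hn
  have hX1 : fr n < 1 := fr_lt_one n
  have hex : ∃ t, k ≤ uw (3*n + t) := by
    refine ⟨k, le_trans (by omega) (two_mul_le_uw (3*n+k))⟩
  set t0 := Nat.find hex with ht0def
  have hfind : k ≤ uw (3*n + t0) := Nat.find_spec hex
  have hprev : ∀ t, t < t0 → uw (3*n+t) < k := fun t ht =>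
    Nat.not_le.mp (Nat.find_min hex ht)
  -- real value of uw n
  have hun := uw_real n
  -- t0 ≥ 1
  have h3n : uw (3*n) ≤ 3 * uw n + 2 := by
    have h := uw_real (3*n)
    have : (uw (3*n) : ℝ) < ((3 * uw n + 3 : ℕ) : ℝ) := by
      push_cast at h ⊢
      nlinarith [fr_nonneg (3*n), hX1]
    have := (Nat.cast_lt (α := ℝ)).mp this
    omega
  have ht01 : 1 ≤ t0 := by
    rcases Nat.eq_zero_or_pos t0 with h | h
    · rw [h] at hfind; simp at hfind; omega
    · exact h
  have hMk : uw (3*n + (t0 - 1)) < k := hprev (t0-1) (by omega)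
  have hgap : uw (3*n + t0) ≤ uw (3*n + (t0-1)) + 3 := by
    have h1 : uw ((3*n + (t0-1)) + 1) ≤ uw (3*n + (t0-1)) + uw 1 + 1 := uw_subadd _ 1
    rw [uw_one] at h1
    have : (3*n + (t0-1)) + 1 = 3*n + t0 := by omega
    rw [this] at h1
    omega
  have hcases : uw (3*n+t0) = k ∨ uw (3*n+t0) = k + 1 ∨ uw (3*n+t0) = k + 2 := by omega
  rcases hcases with hr0 | hr1 | hr2
  · -- r = 0 : single element
    have : k = uw (3*n+t0) := hr0.symm
    rw [this]
    exact mem_uw (by omega)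
  all_goals (
    -- t0 ≥ 8
    have h8 : 8 ≤ t0 := by
      by_contra hcon
      push_neg at hcon
      have hm : uw (3*n+t0) ≤ uw (3*n+7) := uw_mono (by omega)
      have h7 : (uw (3*n+7) : ℝ) < ((3 * uw n + 22 : ℕ):ℝ) := by
        have h := uw_real (3*n+7)
        have hun' := hun
        rw [phi_sq] at h hun'
        push_cast at h hun' ⊢
        nlinarith [fr_nonneg (3*n+7), hX1]
      have h7' := (Nat.cast_lt (α := ℝ)).mp h7
      omega)
  · -- r = 1
    obtain ⟨a, han, ha2, hfa1, hfa2⟩ := exists_big_fr hn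
    have hane : fr a ≠ fr (3*n+t0) := fr_ne_fr (by omega)
    have hs1 : fr (3*n+t0) < 1 := fr_lt_one _
    rcases lt_or_ge (fr (3*n+t0)) (fr a) with hlt | hle
    · -- two-sum a + (T - a)
      set b := 3*n + t0 - a with hb
      have hab : a + b = 3*n + t0 := by omega
      have hcond : fr (a + b) < fr a := by rw [hab]; exact hlt
      have hsum := key2 hcond
      rw [hab, hr1] at hsum
      have hk2 : k = uw a + uw b := by omega
      rw [hk2]
      exact add_mem (mem_uw han) (mem_uw (by omega))
    · have hlt' : fr a < fr (3*n+t0) := lt_of_le_of_ne hle hane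
      -- three-sum a + a + c
      set c := 3*n + t0 - 2*a with hc
      have habc : a + a + c = 3*n + t0 := by omega
      have hcond1 : fr (a + a + c) < fr a + fr a := by
        rw [habc]; linarith
      have hcond2 : fr a + fr a < 1 + fr (a + a + c) := by
        rw [habc]; linarith
      have hsum := key3' hcond1 hcond2
      rw [habc, hr1] at hsum
      have hk2 : k = uw a + uw a + uw c := by omega
      rw [hk2]
      exact add_mem (add_mem (mem_uw han) (mem_uw han)) (mem_uw (by omega))
  · -- r = 2
    have hM : uw (3*n + (t0-1)) = k - 1 ∧ k ≥ 1 := by omega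
    -- s < phi - 1
    have hsphi : fr (3*n+t0) < phi - 1 := by
      have e1 := uw_real (3*n+t0)
      have e2 := uw_real (3*n+(t0-1))
      have hc1 : ((3*n+t0 : ℕ):ℝ) = ((3*n+(t0-1) : ℕ):ℝ) + 1 := by
        push_cast [Nat.cast_sub (by omega : 1 ≤ t0)]
        ring
      rw [hr2] at e1
      rw [hM.1] at e2
      rw [hc1] at e1
      have hk1 : ((k - 1 : ℕ):ℝ) = (k:ℝ) - 1 := by
        push_cast [Nat.cast_sub hM.2]; ring
      rw [hk1] at e2
      rw [phi_sq] at e1 e2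
      push_cast at e1 e2
      have hfrM := fr_lt_one (3*n+(t0-1))
      linarith
    rcases eq_or_lt_of_le h8 with h8eq | h9
    · -- t0 = 8 : use n + n + (n+8)
      have habc : n + n + (n+8) = 3*n + t0 := by omega
      have hcond : 1 + fr (n + n + (n+8)) < fr n + fr n := by
        rw [habc]
        have e1 := uw_real (3*n+t0)
        rw [hr2] at e1
        rw [phi_sq] at e1
        have hc2 : ((3*n+t0 : ℕ):ℝ) = 3*(n:ℝ) + 8 := by
          rw [← h8eq]; push_cast; ring
        rw [hc2] at e1
        have hkr : ((3 * uw n + 21 : ℕ):ℝ) ≤ (k:ℝ) := by exact_mod_cast hk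
        have hun' := hun
        rw [phi_sq] at hun'
        push_cast at hkr e1 hun'
        linarith [fr_nonneg (3*n+t0)]
      have hsum := key3 hcond
      rw [habc, hr2] at hsum
      have hk2 : k = uw n + uw n + uw (n+8) := by omega
      rw [hk2]
      exact add_mem (add_mem (mem_uw (le_refl n)) (mem_uw (le_refl n))) (mem_uw (by omega))
    · -- t0 ≥ 9 : use claimC
      obtain ⟨a, b, han, hbn, hab9, hfab⟩ := claimC hn
      set c := 3*n + t0 - (a + b) with hc
      have habc : a + b + c = 3*n + t0 := by omega
      have hcond : 1 + fr (a + b + c) < fr a + fr b := by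
        rw [habc]; linarith
      have hsum := key3 hcond
      rw [habc, hr2] at hsum
      have hk2 : k = uw a + uw b + uw c := by omega
      rw [hk2]
      exact add_mem (add_mem (mem_uw han) (mem_uw hbn)) (mem_uw (by omega))

theorem frobenius_upper_wythoff_bounds (n F : ℕ) (hn : 1 ≤ n)
    (hF : FrobeniusNumber F {x : ℕ | ∃ j, n ≤ j ∧ x = uw j}) :
    -5 ≤ (F : ℤ) - 3 * (uw n : ℤ) ∧ (F : ℤ) - 3 * (uw n : ℤ) ≤ 20 := by
  obtain ⟨hF1, hF2⟩ := hF
  constructor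
  · obtain ⟨N, hN1, hN2⟩ := lower_bound hn
    have hNF : N ≤ F := hF2 hN2
    have : (N:ℤ) ≤ (F:ℤ) := by exact_mod_cast hNF
    omega
  · by_contra h
    push_neg at h
    have hk : 3 * uw n + 21 ≤ F := by omega
    exact hF1 (upper_rep hn F hk)
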